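/- arXiv:2201.07471 — 2 statements merged into one kernel-verified Lean document; each statement's English description precedes it below -/
import Mathlib

section
/- Let M be an n×n symmetric positive definite real matrix, K an n×n symmetric positive semidefinite real matrix, Δt > 0, ν ≥ 0, a₀ ≥ 0, and let K̂ = M/Δt + νK + a₀M. Let E₁ be the N×N subdiagonal shift matrix and define the block matrix 𝒦 = I_N ⊗ K̂ − E₁ ⊗ (M/Δt). Then 𝒦 + 𝒦ᵀ is positive definite. -/
open Matrix
open Kronecker

private lemma psd_smul {m : Type*} [Fintype m] {A : Matrix m m ℝ} (hA : A.PosSemidef)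
    {c : ℝ} (hc : 0 ≤ c) : (c • A).PosSemidef := by
  rw [posSemidef_iff_dotProduct_mulVec]
  refine ⟨?_, fun x => ?_⟩
  · unfold Matrix.IsHermitian
    rw [conjTranspose_smul, hA.1.eq]
    simp
  · rw [smul_mulVec, dotProduct_smul, smul_eq_mul]
    exact mul_nonneg hc (hA.dotProduct_mulVec_nonneg x)

private lemma pd_smul {m : Type*} [Fintype m] {A : Matrix m m ℝ} (hA : A.PosDef)
    {c : ℝ} (hc : 0 < c) : (c • A).PosDef := by
  rw [posDef_iff_dotProduct_mulVec]
  refine ⟨(psd_smul hA.posSemidef hc.le).1, fun x hx => ?_⟩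
  rw [smul_mulVec, dotProduct_smul, smul_eq_mul]
  exact mul_pos hc (hA.dotProduct_mulVec_pos hx)

private lemma psd_kron {m p : Type*} [Fintype m] [Fintype p] [DecidableEq m] [DecidableEq p]
    {A : Matrix m m ℝ} {B : Matrix p p ℝ} (hA : A.PosSemidef) (hB : B.PosSemidef) :
    (A ⊗ₖ B).PosSemidef := by
  exact hA.kronecker hB

private lemma psd_posDef {m : Type*} [Fintype m] [DecidableEq m] {A : Matrix m m ℝ}
    (hA : A.PosSemidef) (hdet : A.det ≠ 0) : A.PosDef := by
  rw [posDef_iff_dotProduct_mulVec]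
  refine ⟨hA.1, fun x hx => ?_⟩
  rcases lt_or_eq_of_le (hA.dotProduct_mulVec_nonneg x) with h | h
  · exact h
  · exfalso
    have h0 : A *ᵥ x = 0 := (hA.dotProduct_mulVec_zero_iff x).mp h.symm
    have hinj : Function.Injective (A.mulVec) :=
      mulVec_injective_iff_isUnit.mpr ((isUnit_iff_isUnit_det _).mpr (isUnit_iff_ne_zero.mpr hdet))
    exact hx (hinj (by simpa using h0))

private lemma pd_kron {m p : Type*} [Fintype m] [Fintype p] [DecidableEq m] [DecidableEq p]
    {A : Matrix m m ℝ} {B : Matrix p p ℝ} (hA : A.PosDef) (hB : B.PosDef) :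
    (A ⊗ₖ B).PosDef := by
  refine psd_posDef (psd_kron hA.posSemidef hB.posSemidef) ?_
  rw [det_kronecker]
  exact ne_of_gt (mul_pos (pow_pos hA.det_pos _) (pow_pos hB.det_pos _))

private lemma sum_ind {N : ℕ} (x : Fin N → ℝ) (m : ℕ) (hm : m < N) :
    ∑ j : Fin N, (if m = (j : ℕ) then (1:ℝ) else 0) * x j = x ⟨m, hm⟩ := by
  rw [Finset.sum_eq_single (⟨m, hm⟩ : Fin N)]
  · simp
  · intro j _ hj
    rw [if_neg, zero_mul]
    intro h
    exact hj (Fin.ext h.symm)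
  · intro h
    exact absurd (Finset.mem_univ _) h

private lemma tridiag_posDef (N : ℕ) (hN : 1 ≤ N) (E₁ : Matrix (Fin N) (Fin N) ℝ)
    (hE : ∀ i j : Fin N, E₁ i j = if (i : ℕ) = (j : ℕ) + 1 then 1 else 0) :
    ((2 : ℝ) • (1 : Matrix (Fin N) (Fin N) ℝ) - E₁ - E₁ᵀ).PosDef := by
  set D : Matrix (Fin (N+1)) (Fin N) ℝ :=
    Matrix.of (fun k j => (if (k:ℕ) = (j:ℕ) then (1:ℝ) else 0)
      - (if (k:ℕ) = (j:ℕ)+1 then 1 else 0)) with hD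
  have hfact : (2 : ℝ) • (1 : Matrix (Fin N) (Fin N) ℝ) - E₁ - E₁ᵀ = Dᵀ * D := by
    ext i j
    simp only [mul_apply, transpose_apply, hD, of_apply, Matrix.sub_apply, Matrix.smul_apply, one_apply, hE,
      smul_eq_mul]
    rw [Fin.sum_univ_eq_sum_range (fun k =>
      ((if k = (i:ℕ) then (1:ℝ) else 0) - (if k = (i:ℕ)+1 then 1 else 0)) *
      ((if k = (j:ℕ) then (1:ℝ) else 0) - (if k = (j:ℕ)+1 then 1 else 0)))]
    simp only [sub_mul, mul_sub, ite_mul, mul_ite, one_mul, zero_mul, mul_one, mul_zero,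
      Finset.sum_sub_distrib, Finset.sum_ite_eq', Finset.mem_range]
    have hi := i.isLt
    have hj := j.isLt
    simp only [Fin.ext_iff]
    split_ifs <;> first | ring1 | (exfalso; omega)
  rw [hfact]
  have hpsd : (Dᵀ * D).PosSemidef := by
    have := posSemidef_conjTranspose_mul_self D
    rwa [conjTranspose_eq_transpose_of_trivial] at this
  rw [posDef_iff_dotProduct_mulVec]
  refine ⟨hpsd.1, fun x hx => ?_⟩
  rcases lt_or_eq_of_le (hpsd.dotProduct_mulVec_nonneg x) with h | h
  · exact h
  exfalso
  have hDx : D *ᵥ x = 0 := by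
    have h0 : (D *ᵥ x) ⬝ᵥ (D *ᵥ x) = 0 := by
      have : star x ⬝ᵥ (Dᵀ * D) *ᵥ x = (D *ᵥ x) ⬝ᵥ (D *ᵥ x) := by
        rw [star_trivial, ← mulVec_mulVec, dotProduct_mulVec, vecMul_transpose]
      rw [← this, ← h]
    exact dotProduct_self_eq_zero.mp h0
  apply hx
  have key : ∀ m : ℕ, ∀ hm : m < N, x ⟨m, hm⟩ = 0 := by
    intro m
    induction m with
    | zero =>
      intro hm
      have hrow := congrFun hDx ⟨0, by omega⟩
      simp only [mulVec, dotProduct, hD, of_apply, Pi.zero_apply, Fin.val_mk] at hrow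
      have h2 : ∀ j : Fin N, (if (0:ℕ) = (j:ℕ)+1 then (1:ℝ) else 0) = 0 :=
        fun j => if_neg (by omega)
      simp only [sub_mul, Finset.sum_sub_distrib, h2, zero_mul, Finset.sum_const_zero,
        sub_zero] at hrow
      rw [sum_ind x 0 hm] at hrow
      exact hrow
    | succ m ih =>
      intro hm
      have hrow := congrFun hDx ⟨m+1, by omega⟩
      simp only [mulVec, dotProduct, hD, of_apply, Pi.zero_apply, Fin.val_mk] at hrow
      simp only [sub_mul, Finset.sum_sub_distrib, add_left_inj] at hrow
      rw [sum_ind x (m+1) hm, sum_ind x m (by omega)] at hrow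
      rw [ih (by omega)] at hrow
      linarith
  funext j
  exact key j.1 j.2

theorem stmt_9 (n N : ℕ) (hN : 1 ≤ N)
    (M K : Matrix (Fin n) (Fin n) ℝ) (hM : M.PosDef) (hK : K.PosSemidef)
    (Δt ν a₀ : ℝ) (hΔt : 0 < Δt) (hν : 0 ≤ ν) (ha₀ : 0 ≤ a₀)
    (E₁ : Matrix (Fin N) (Fin N) ℝ)
    (hE : ∀ i j : Fin N, E₁ i j = if (i : ℕ) = (j : ℕ) + 1 then 1 else 0) :
    letI Khat : Matrix (Fin n) (Fin n) ℝ := Δt⁻¹ • M + ν • K + a₀ • M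
    letI 𝒦 : Matrix (Fin N × Fin n) (Fin N × Fin n) ℝ :=
      (1 : Matrix (Fin N) (Fin N) ℝ) ⊗ₖ Khat - E₁ ⊗ₖ (Δt⁻¹ • M)
    (𝒦 + 𝒦ᵀ).PosDef := by
  show ((((1 : Matrix (Fin N) (Fin N) ℝ) ⊗ₖ (Δt⁻¹ • M + ν • K + a₀ • M) - E₁ ⊗ₖ (Δt⁻¹ • M)) +
    ((1 : Matrix (Fin N) (Fin N) ℝ) ⊗ₖ (Δt⁻¹ • M + ν • K + a₀ • M) - E₁ ⊗ₖ (Δt⁻¹ • M))ᵀ)).PosDef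
  have hMsym : ∀ a b, M a b = M b a := fun a b => by
    conv_lhs => rw [← hM.isHermitian.eq]
    simp [conjTranspose_apply]
  have hKsym : ∀ a b, K a b = K b a := fun a b => by
    conv_lhs => rw [← hK.isHermitian.eq]
    simp [conjTranspose_apply]
  have key : (((1 : Matrix (Fin N) (Fin N) ℝ) ⊗ₖ (Δt⁻¹ • M + ν • K + a₀ • M) - E₁ ⊗ₖ (Δt⁻¹ • M)) +
      ((1 : Matrix (Fin N) (Fin N) ℝ) ⊗ₖ (Δt⁻¹ • M + ν • K + a₀ • M) - E₁ ⊗ₖ (Δt⁻¹ • M))ᵀ) =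
      ((2:ℝ) • (1 : Matrix (Fin N) (Fin N) ℝ) - E₁ - E₁ᵀ) ⊗ₖ (Δt⁻¹ • M)
        + (1 : Matrix (Fin N) (Fin N) ℝ) ⊗ₖ ((2*ν) • K + (2*a₀) • M) := by
    ext ⟨i, k⟩ ⟨j, l⟩
    simp only [Matrix.add_apply, Matrix.sub_apply, transpose_apply, kroneckerMap_apply,
      Matrix.smul_apply, one_apply, smul_eq_mul, hE, Fin.ext_iff]
    rw [hMsym l k, hKsym l k]
    split_ifs <;> first | ring1 | (exfalso; omega)
  rw [key]
  exact PosDef.add_posSemidef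
    (pd_kron (tridiag_posDef N hN E₁ hE) (pd_smul hM (inv_pos.mpr hΔt)))
    (psd_kron PosSemidef.one
      ((psd_smul hK (by linarith)).add (psd_smul hM.posSemidef (by linarith))))
end

section
/- Let A be an n×n real matrix such that A + Aᵀ is positive definite, let D be an n×n diagonal matrix with nonnegative entries, and let T : ℝⁿ → ℝⁿ be a map of the form T(p) = D·P(p) + A·p, where P : ℝⁿ → ℝⁿ acts componentwise by P(p)_i = min(b, max(a, p_i/γ)) with γ > 0 and a ≤ b. Then T is strictly monotone, i.e., ⟨T(p) − T(q), p − q⟩ > 0 for all p ≠ q; consequently the equation T(p) = c has at most one solution for each c ∈ ℝⁿ. -/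
open Matrix

theorem stmt_17 (n : ℕ) (A : Matrix (Fin n) (Fin n) ℝ)
    (hA : (A + Aᵀ).PosDef)
    (d : Fin n → ℝ) (hd : ∀ i, 0 ≤ d i)
    (γ a b : ℝ) (hγ : 0 < γ) (hab : a ≤ b)
    (T : (Fin n → ℝ) → (Fin n → ℝ))
    (hT : ∀ p, T p = (Matrix.diagonal d).mulVec (fun i => min b (max a (p i / γ)))
        + A.mulVec p) :
    (∀ p q : Fin n → ℝ, p ≠ q → 0 < (T p - T q) ⬝ᵥ (p - q)) ∧
    ∀ (c : Fin n → ℝ) (p q : Fin n → ℝ), T p = c → T q = c → p = q := by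
  have fmono : Monotone (fun x : ℝ => min b (max a (x / γ))) := by
    intro x y hxy
    exact min_le_min le_rfl (max_le_max le_rfl (by gcongr))
  have key : ∀ p q : Fin n → ℝ, p ≠ q → 0 < (T p - T q) ⬝ᵥ (p - q) := by
    intro p q hpq
    set x := p - q with hx
    have hx0 : x ≠ 0 := sub_ne_zero.mpr hpq
    -- quadratic part
    have hquad : 0 < A.mulVec x ⬝ᵥ x := by
      have h := hA.dotProduct_mulVec_pos hx0
      simp only [RCLike.re_to_real, star_trivial] at h
      have hexp : x ⬝ᵥ (A + Aᵀ).mulVec x = 2 * (A.mulVec x ⬝ᵥ x) := by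
        rw [Matrix.add_mulVec, dotProduct_add]
        have h1 : x ⬝ᵥ Aᵀ.mulVec x = A.mulVec x ⬝ᵥ x := by
          rw [Matrix.mulVec_transpose, dotProduct_comm x, ← Matrix.dotProduct_mulVec,
            dotProduct_comm x]
        rw [h1, dotProduct_comm]
        ring
      rw [hexp] at h
      linarith
    -- diagonal part
    have hsum : 0 ≤ ((Matrix.diagonal d).mulVec (fun i => min b (max a (p i / γ)))
        - (Matrix.diagonal d).mulVec (fun i => min b (max a (q i / γ)))) ⬝ᵥ x := by
      rw [← Matrix.mulVec_sub]
      unfold dotProduct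
      apply Finset.sum_nonneg
      intro i _
      rw [Matrix.mulVec_diagonal]
      have : 0 ≤ (min b (max a (p i / γ)) - min b (max a (q i / γ))) * (p i - q i) := by
        rcases le_total (p i) (q i) with h | h
        · nlinarith [fmono h, sub_nonpos.mpr h]
        · exact mul_nonneg (sub_nonneg.mpr (fmono h)) (sub_nonneg.mpr h)
      simp only [Pi.sub_apply]
      have hxi : x i = p i - q i := rfl
      rw [hxi]
      calc (0:ℝ) ≤ d i * ((min b (max a (p i / γ)) - min b (max a (q i / γ))) * (p i - q i)) :=
            mul_nonneg (hd i) this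
        _ = d i * (min b (max a (p i / γ)) - min b (max a (q i / γ))) * (p i - q i) := by ring
    have hTexp : (T p - T q) ⬝ᵥ x
        = ((Matrix.diagonal d).mulVec (fun i => min b (max a (p i / γ)))
          - (Matrix.diagonal d).mulVec (fun i => min b (max a (q i / γ)))) ⬝ᵥ x
          + A.mulVec x ⬝ᵥ x := by
      rw [hT p, hT q, hx, Matrix.mulVec_sub]
      rw [show (Matrix.diagonal d).mulVec (fun i => min b (max a (p i / γ))) + A.mulVec p
          - ((Matrix.diagonal d).mulVec (fun i => min b (max a (q i / γ))) + A.mulVec q)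
          = ((Matrix.diagonal d).mulVec (fun i => min b (max a (p i / γ)))
            - (Matrix.diagonal d).mulVec (fun i => min b (max a (q i / γ))))
            + (A.mulVec p - A.mulVec q) from by abel]
      rw [add_dotProduct]
    rw [hTexp]
    linarith
  refine ⟨key, fun c p q hp hq => ?_⟩
  by_contra hpq
  have := key p q hpq
  rw [hp, hq, sub_self, zero_dotProduct] at this
  exact lt_irrefl 0 this
end
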